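/- Fix c₀ > 0 and ε ∈ {+1,−1}, and let (T, e₁, e₂) : ℝ → (ℝ³)³ be the unique solution of the linear ODE system T′(s) = c₀ e₁(s), e₁′(s) = −ε c₀ T(s) + (s/2) e₂(s), e₂′(s) = −(s/2) e₁(s) with initial conditions T(0) = (0,0,1), e₁(0) = (1,0,0), e₂(0) = (0,1,0). Then there exist A¹, A² ∈ ℝ³ and C > 0 such that for all s ≥ 1, |T(s) − A¹ + 2c₀ e₂(s)/s| ≤ C/s², and for all s ≤ −1, |T(s) − A² + 2c₀ e₂(s)/s| ≤ C/s². (In particular T(s) → A¹ as s → +∞ and T(s) → A² as s → −∞.) -/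

import Mathlib

open MeasureTheory Set Filter Topology

noncomputable section

/-- Generalized cross product `a ∧_ε b` on ℝ³ (ε = 1: Euclidean, ε = -1: hyperbolic). -/
def wedge (ε : ℝ) (a b : Fin 3 → ℝ) : Fin 3 → ℝ :=
  ![a 1 * b 2 - a 2 * b 1, a 2 * b 0 - a 0 * b 2, ε * (a 0 * b 1 - a 1 * b 0)]

/-- Generalized scalar product `a ∘_ε b` on ℝ³. -/
def circ (ε : ℝ) (a b : Fin 3 → ℝ) : ℝ :=
  a 0 * b 0 + a 1 * b 1 + ε * (a 2 * b 2)

/-- Euclidean norm on ℝ³. -/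
def norm3 (a : Fin 3 → ℝ) : ℝ := Real.sqrt (a 0 ^ 2 + a 1 ^ 2 + a 2 ^ 2)

/-- `G(s) = 2c₀·(0,1,0) + ∫₀ˢ T(σ) dσ`. -/
def Gfun (c₀ : ℝ) (T : ℝ → Fin 3 → ℝ) (s : ℝ) : Fin 3 → ℝ :=
  (2 * c₀) • ![0, 1, 0] + ∫ σ in (0:ℝ)..s, T σ

/-- The self-similar profile `X_{c₀}(s,t) = √t · G(s/√t)`. -/
def Xfun (c₀ : ℝ) (T : ℝ → Fin 3 → ℝ) (s t : ℝ) : Fin 3 → ℝ :=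
  Real.sqrt t • Gfun c₀ T (s / Real.sqrt t)

private lemma norm3_le_sum (a : Fin 3 → ℝ) : norm3 a ≤ |a 0| + |a 1| + |a 2| := by
  rw [norm3]
  have h : a 0 ^ 2 + a 1 ^ 2 + a 2 ^ 2 ≤ (|a 0| + |a 1| + |a 2|) ^ 2 := by
    nlinarith [abs_nonneg (a 0), abs_nonneg (a 1), abs_nonneg (a 2),
      sq_abs (a 0), sq_abs (a 1), sq_abs (a 2),
      mul_nonneg (abs_nonneg (a 0)) (abs_nonneg (a 1)),
      mul_nonneg (abs_nonneg (a 0)) (abs_nonneg (a 2)),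
      mul_nonneg (abs_nonneg (a 1)) (abs_nonneg (a 2))]
  calc Real.sqrt (a 0 ^ 2 + a 1 ^ 2 + a 2 ^ 2)
      ≤ Real.sqrt ((|a 0| + |a 1| + |a 2|) ^ 2) := Real.sqrt_le_sqrt h
  _ = |a 0| + |a 1| + |a 2| := Real.sqrt_sq (by positivity)


private lemma absle_of_sq {a M : ℝ} (h : a ^ 2 ≤ M) (hM : 1 ≤ M) : |a| ≤ M := by
  nlinarith [sq_abs a, abs_nonneg a, sq_nonneg (|a| - 1)]

private lemma poly1 (c₀ ε s : ℝ) (hc₀ : 0 < c₀) (hε1 : -1 ≤ ε) (hε1' : ε ≤ 1)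
    (a b d Kx : ℝ) (hK : 0 ≤ Kx) (hxb : a ^ 2 ≤ b ^ 2 + d ^ 2 + Kx)
    (hs1 : 1 ≤ s) (h8c : 8 * c₀ ≤ s) (h8c2 : 8 * c₀ ^ 2 ≤ s) :
    s ^ 2 * (b ^ 2 + d ^ 2 - Kx) ≤ 4 * (s ^ 2 * (b ^ 2 + d ^ 2)
      - 4 * ε * c₀ * (a * d) * s + 2 * ε * c₀ ^ 2 * (b ^ 2 - d ^ 2)) := by
  have hsp : (0:ℝ) < s := by linarith
  have P1 : 0 ≤ (1 + ε) * (c₀ * s * (a - d) ^ 2) := by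
    apply mul_nonneg (by linarith); positivity
  have P2 : 0 ≤ (1 - ε) * (c₀ * s * (a + d) ^ 2) := by
    apply mul_nonneg (by linarith); positivity
  have P3 : 8 * c₀ * s * (a ^ 2 + d ^ 2) ≤ s ^ 2 * (a ^ 2 + d ^ 2) := by
    nlinarith [mul_nonneg (mul_nonneg (sub_nonneg.mpr h8c) hsp.le)
      (by positivity : (0:ℝ) ≤ a ^ 2 + d ^ 2)]
  have P4 : s ^ 2 * a ^ 2 ≤ s ^ 2 * (b ^ 2 + d ^ 2 + Kx) := by
    nlinarith [mul_nonneg (by positivity : (0:ℝ) ≤ s ^ 2) (sub_nonneg.mpr hxb)]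
  have P5 : 0 ≤ (1 + ε) * (c₀ ^ 2 * b ^ 2) := by
    apply mul_nonneg (by linarith); positivity
  have P6 : 0 ≤ (1 - ε) * (c₀ ^ 2 * d ^ 2) := by
    apply mul_nonneg (by linarith); positivity
  have P7 : 8 * c₀ ^ 2 * s * (b ^ 2 + d ^ 2) ≤ s ^ 2 * (b ^ 2 + d ^ 2) := by
    nlinarith [mul_nonneg (mul_nonneg (sub_nonneg.mpr h8c2) hsp.le)
      (by positivity : (0:ℝ) ≤ b ^ 2 + d ^ 2)]
  have P8 : 8 * c₀ ^ 2 * (b ^ 2 + d ^ 2) ≤ 8 * c₀ ^ 2 * s * (b ^ 2 + d ^ 2) := by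
    nlinarith [mul_nonneg (mul_nonneg (by norm_num : (0:ℝ) ≤ 8) (sq_nonneg c₀))
      (mul_nonneg (sub_nonneg.mpr hs1) (by positivity : (0:ℝ) ≤ b ^ 2 + d ^ 2))]
  have hKs : Kx ≤ s ^ 2 * Kx := by
    nlinarith [mul_nonneg (sub_nonneg.mpr hs1) hK, mul_nonneg hsp.le hK]
  nlinarith [P1, P2, P3, P4, P5, P6, P7, P8, sq_nonneg b, sq_nonneg d,
    mul_nonneg (mul_nonneg hsp.le hsp.le) hK]

private lemma poly2 (c₀ ε s : ℝ) (hc₀ : 0 < c₀) (hε1 : -1 ≤ ε) (hε1' : ε ≤ 1)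
    (a b d Kx : ℝ) (hK : 0 ≤ Kx) (hxb : a ^ 2 ≤ b ^ 2 + d ^ 2 + Kx)
    (hs1 : 1 ≤ s) :
    4 * ε * c₀ * (a * d) * s ^ 2 - 4 * c₀ ^ 3 * (a * b) * s ^ 2
      - 4 * ε * c₀ ^ 2 * (b ^ 2 - d ^ 2) * s
    ≤ 16 * (c₀ + c₀ ^ 2 + c₀ ^ 3) * s ^ 2 * (b ^ 2 + d ^ 2 + Kx + 1) := by
  have hsp : (0:ℝ) < s := by linarith
  have Q1 : 0 ≤ (1 + ε) * (c₀ * s ^ 2 * (a - d) ^ 2) := by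
    apply mul_nonneg (by linarith); positivity
  have Q2 : 0 ≤ (1 - ε) * (c₀ * s ^ 2 * (a + d) ^ 2) := by
    apply mul_nonneg (by linarith); positivity
  have Q4 : 0 ≤ c₀ ^ 3 * s ^ 2 * (a + b) ^ 2 := by positivity
  have Q5 : 0 ≤ (1 + ε) * (c₀ ^ 2 * s * b ^ 2) := by
    apply mul_nonneg (by linarith); positivity
  have Q6 : 0 ≤ (1 - ε) * (c₀ ^ 2 * s * d ^ 2) := by
    apply mul_nonneg (by linarith); positivity
  have Q7 : 0 ≤ (s ^ 2 - s) * (c₀ ^ 2 * (b ^ 2 + d ^ 2)) := by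
    apply mul_nonneg (by nlinarith); positivity
  have PA : c₀ * (s ^ 2 * a ^ 2) ≤ c₀ * (s ^ 2 * (b ^ 2 + d ^ 2 + Kx)) := by
    apply mul_le_mul_of_nonneg_left _ hc₀.le
    exact mul_le_mul_of_nonneg_left hxb (by positivity)
  have PB : c₀ ^ 3 * (s ^ 2 * a ^ 2) ≤ c₀ ^ 3 * (s ^ 2 * (b ^ 2 + d ^ 2 + Kx)) := by
    apply mul_le_mul_of_nonneg_left _ (by positivity)
    exact mul_le_mul_of_nonneg_left hxb (by positivity)
  have F1 : 0 ≤ c₀ * (s ^ 2 * (b ^ 2 + d ^ 2)) := by positivity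
  have F2 : 0 ≤ c₀ ^ 2 * (s ^ 2 * (b ^ 2 + d ^ 2)) := by positivity
  have F3 : 0 ≤ c₀ ^ 3 * (s ^ 2 * (b ^ 2 + d ^ 2)) := by positivity
  have F4 : 0 ≤ c₀ * (s ^ 2 * Kx) := by positivity
  have F5 : 0 ≤ c₀ ^ 2 * (s ^ 2 * Kx) := by positivity
  have F6 : 0 ≤ c₀ ^ 3 * (s ^ 2 * Kx) := by positivity
  have F7 : 0 ≤ c₀ * s ^ 2 := by positivity
  have F8 : 0 ≤ c₀ ^ 2 * s ^ 2 := by positivity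
  have F9 : 0 ≤ c₀ ^ 3 * s ^ 2 := by positivity
  nlinarith [Q1, Q2, Q4, Q5, Q6, Q7, PA, PB, F1, F2, F3, F4, F5, F6, F7, F8, F9]

set_option maxHeartbeats 1600000 in
lemma core (c₀ ε : ℝ) (hc₀ : 0 < c₀) (hε : ε = 1 ∨ ε = -1)
    (x u v : ℝ → ℝ)
    (hx : ∀ s, HasDerivAt x (c₀ * u s) s)
    (hu : ∀ s, HasDerivAt u (-(ε * c₀) * x s + (s / 2) * v s) s)
    (hv : ∀ s, HasDerivAt v (-(s / 2) * u s) s) :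
    ∃ L C : ℝ, 0 < C ∧ (∀ s : ℝ, 1 ≤ s → |x s - L + (2 * c₀ / s) * v s| ≤ C / s ^ 2) ∧
      Tendsto x atTop (𝓝 L) := by
  have hε1 : -1 ≤ ε := by rcases hε with h | h <;> rw [h] <;> norm_num
  have hε1' : ε ≤ 1 := by rcases hε with h | h <;> rw [h] <;> norm_num
  have hε2 : ε ^ 2 = 1 := by rcases hε with h | h <;> rw [h] <;> norm_num
  -- conservation law
  set K : ℝ := u 0 ^ 2 + v 0 ^ 2 + ε * x 0 ^ 2 with hKdef
  have hcons : ∀ s, u s ^ 2 + v s ^ 2 + ε * x s ^ 2 = K := by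
    intro s
    have hd : ∀ t, HasDerivAt (fun r => u r ^ 2 + v r ^ 2 + ε * x r ^ 2) 0 t := by
      intro t
      have h1 := ((hu t).pow 2).add ((hv t).pow 2)
      have h2 := ((hx t).pow 2).const_mul ε
      have h : HasDerivAt (fun r => u r ^ 2 + v r ^ 2 + ε * x r ^ 2) _ t := h1.add h2
      convert h using 1
      ring
    exact is_const_of_deriv_eq_zero (f := fun r => u r ^ 2 + v r ^ 2 + ε * x r ^ 2)
      (fun t => (hd t).differentiableAt) (fun t => (hd t).deriv) s 0
  have hKnn : 0 ≤ |K| := abs_nonneg K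
  have hxb : ∀ s, x s ^ 2 ≤ u s ^ 2 + v s ^ 2 + |K| := by
    intro s
    have h := hcons s
    have h2 : (0:ℝ) ≤ u s ^ 2 + v s ^ 2 := by positivity
    rcases hε with h1 | h1 <;> rw [h1] at h <;> cases' abs_cases K with hK hK <;> nlinarith
  -- the corrected energy
  set Ψ : ℝ → ℝ := fun r => u r ^ 2 + v r ^ 2 - 4 * ε * c₀ * (x r * v r) / r
      + 2 * ε * c₀ ^ 2 * (u r ^ 2 - v r ^ 2) / r ^ 2 with hΨdef
  have hΨ : ∀ s : ℝ, 0 < s → HasDerivAt Ψ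
      (4 * ε * c₀ * (x s * v s) / s ^ 2 - 4 * c₀ ^ 3 * (x s * u s) / s ^ 2
        - 4 * ε * c₀ ^ 2 * (u s ^ 2 - v s ^ 2) / s ^ 3) s := by
    intro s hs
    have hs0 : s ≠ 0 := hs.ne'
    have hinv : HasDerivAt (fun r : ℝ => r⁻¹) (-(s ^ 2)⁻¹) s := hasDerivAt_inv hs0
    have hinv2 : HasDerivAt (fun r : ℝ => (r ^ 2)⁻¹) (-(2 * s) / (s ^ 2) ^ 2) s := by
      have : HasDerivAt (fun r : ℝ => (r ^ 2)⁻¹) _ s := (hasDerivAt_pow 2 s).inv (by positivity)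
      simpa using this
    have h1 := ((hu s).pow 2).add ((hv s).pow 2)
    have h2 := (((hx s).mul (hv s)).mul hinv).const_mul (4 * ε * c₀)
    have hd := ((hu s).pow 2).sub ((hv s).pow 2)
    have h3 := (hd.mul hinv2).const_mul (2 * ε * c₀ ^ 2)
    have h : HasDerivAt (F := ℝ) _ _ s := (h1.sub h2).add h3
    convert h using 1
    · funext r; simp only [hΨdef, Pi.add_apply, Pi.sub_apply, Pi.mul_apply, Pi.pow_apply]; ring
    · simp only [Pi.mul_apply, Pi.sub_apply, Pi.pow_apply]
      field_simp
      linear_combination (8 * c₀ ^ 3 * x s * u s * s) * hε2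
  set S₀ : ℝ := 1 + 8 * c₀ + 8 * c₀ ^ 2 with hS₀def
  have hS₀1 : 1 ≤ S₀ := by nlinarith
  have hS₀pos : 0 < S₀ := by linarith
  set c : ℝ := |K| + 1 with hcdef
  -- polynomial form of s² Ψ
  have hW : ∀ s : ℝ, s ≠ 0 → s ^ 2 * Ψ s = s ^ 2 * (u s ^ 2 + v s ^ 2)
      - 4 * ε * c₀ * (x s * v s) * s + 2 * ε * c₀ ^ 2 * (u s ^ 2 - v s ^ 2) := by
    intro s hs0
    simp only [hΨdef]
    field_simp
  -- lower bound on Ψ for s ≥ S₀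
  have hlow : ∀ s : ℝ, S₀ ≤ s → u s ^ 2 + v s ^ 2 - |K| ≤ 4 * Ψ s := by
    intro s hs
    have hs1 : 1 ≤ s := le_trans hS₀1 hs
    have hspos : 0 < s := by linarith
    have hs2 : (0:ℝ) < s ^ 2 := by positivity
    rw [← mul_le_mul_iff_right₀ hs2]
    have h4 : s ^ 2 * (4 * Ψ s) = 4 * (s ^ 2 * Ψ s) := by ring
    rw [h4, hW s hspos.ne']
    have h8c : 8 * c₀ ≤ s := by rw [hS₀def] at hs; nlinarith
    have h8c2 : 8 * c₀ ^ 2 ≤ s := by rw [hS₀def] at hs; nlinarith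
    exact poly1 c₀ ε s hc₀ hε1 hε1' (x s) (u s) (v s) |K| hKnn (hxb s) hs1 h8c h8c2
  -- derivative upper bound
  set B : ℝ := 16 * (c₀ + c₀ ^ 2 + c₀ ^ 3) with hBdef
  have hBpos : 0 < B := by positivity
  have hup : ∀ s : ℝ, S₀ ≤ s →
      4 * ε * c₀ * (x s * v s) / s ^ 2 - 4 * c₀ ^ 3 * (x s * u s) / s ^ 2
        - 4 * ε * c₀ ^ 2 * (u s ^ 2 - v s ^ 2) / s ^ 3
      ≤ 4 * B / s ^ 2 * (Ψ s + c) := by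
    intro s hs
    have hs1 : 1 ≤ s := le_trans hS₀1 hs
    have hspos : 0 < s := by linarith
    have hs4 : (0:ℝ) < s ^ 4 := by positivity
    have step1 : 4 * ε * c₀ * (x s * v s) / s ^ 2 - 4 * c₀ ^ 3 * (x s * u s) / s ^ 2
        - 4 * ε * c₀ ^ 2 * (u s ^ 2 - v s ^ 2) / s ^ 3
        ≤ B / s ^ 2 * (u s ^ 2 + v s ^ 2 + |K| + 1) := by
      rw [← mul_le_mul_iff_right₀ hs4]
      have e1 : s ^ 4 * (4 * ε * c₀ * (x s * v s) / s ^ 2 - 4 * c₀ ^ 3 * (x s * u s) / s ^ 2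
          - 4 * ε * c₀ ^ 2 * (u s ^ 2 - v s ^ 2) / s ^ 3)
          = 4 * ε * c₀ * (x s * v s) * s ^ 2 - 4 * c₀ ^ 3 * (x s * u s) * s ^ 2
            - 4 * ε * c₀ ^ 2 * (u s ^ 2 - v s ^ 2) * s := by
        field_simp
      have e2 : s ^ 4 * (B / s ^ 2 * (u s ^ 2 + v s ^ 2 + |K| + 1))
          = 16 * (c₀ + c₀ ^ 2 + c₀ ^ 3) * s ^ 2 * (u s ^ 2 + v s ^ 2 + |K| + 1) := by
        rw [hBdef]; field_simp
      rw [e1, e2]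
      exact poly2 c₀ ε s hc₀ hε1 hε1' (x s) (u s) (v s) |K| hKnn (hxb s) hs1
    have step2 : u s ^ 2 + v s ^ 2 + |K| + 1 ≤ 4 * (Ψ s + c) := by
      have := hlow s hs
      rw [hcdef]; linarith
    have step3 : B / s ^ 2 * (u s ^ 2 + v s ^ 2 + |K| + 1) ≤ B / s ^ 2 * (4 * (Ψ s + c)) :=
      mul_le_mul_of_nonneg_left step2 (by positivity)
    have e3 : B / s ^ 2 * (4 * (Ψ s + c)) = 4 * B / s ^ 2 * (Ψ s + c) := by ring
    linarith [step1, step3, e3.le]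
  have hΨc : ∀ s : ℝ, S₀ ≤ s → 0 ≤ Ψ s + c := by
    intro s hs
    have := hlow s hs
    have h1 : (0:ℝ) ≤ u s ^ 2 + v s ^ 2 := by positivity
    rw [hcdef]; linarith
  -- Gronwall via monotone auxiliary function
  set R : ℝ → ℝ := fun r => (Ψ r + c) * Real.exp (4 * B * r⁻¹) with hRdef
  have hR : ∀ s : ℝ, 0 < s → HasDerivAt R
      ((4 * ε * c₀ * (x s * v s) / s ^ 2 - 4 * c₀ ^ 3 * (x s * u s) / s ^ 2
        - 4 * ε * c₀ ^ 2 * (u s ^ 2 - v s ^ 2) / s ^ 3) * Real.exp (4 * B * s⁻¹)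
        + (Ψ s + c) * (Real.exp (4 * B * s⁻¹) * (4 * B * -(s ^ 2)⁻¹))) s := by
    intro s hs
    have hexp : HasDerivAt (fun r : ℝ => Real.exp (4 * B * r⁻¹))
        (Real.exp (4 * B * s⁻¹) * (4 * B * -(s ^ 2)⁻¹)) s :=
      ((hasDerivAt_inv hs.ne').const_mul (4 * B)).exp
    exact ((hΨ s hs).add_const c).mul hexp
  have hanti : AntitoneOn R (Ici S₀) := by
    apply antitoneOn_of_deriv_nonpos (convex_Ici S₀)
    · intro s hs
      exact (hR s (lt_of_lt_of_le hS₀pos hs)).continuousAt.continuousWithinAt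
    · intro s hs
      rw [interior_Ici] at hs
      exact (hR s (hS₀pos.trans hs)).differentiableAt.differentiableWithinAt
    · intro s hs
      rw [interior_Ici] at hs
      rw [(hR s (hS₀pos.trans hs)).deriv]
      have hspos : 0 < s := hS₀pos.trans hs
      have hδ : 4 * ε * c₀ * (x s * v s) / s ^ 2 - 4 * c₀ ^ 3 * (x s * u s) / s ^ 2
          - 4 * ε * c₀ ^ 2 * (u s ^ 2 - v s ^ 2) / s ^ 3 - 4 * B / s ^ 2 * (Ψ s + c) ≤ 0 :=
        sub_nonpos.mpr (hup s hs.le)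
      have he : (4 * ε * c₀ * (x s * v s) / s ^ 2 - 4 * c₀ ^ 3 * (x s * u s) / s ^ 2
          - 4 * ε * c₀ ^ 2 * (u s ^ 2 - v s ^ 2) / s ^ 3) * Real.exp (4 * B * s⁻¹)
          + (Ψ s + c) * (Real.exp (4 * B * s⁻¹) * (4 * B * -(s ^ 2)⁻¹))
          = Real.exp (4 * B * s⁻¹) * (4 * ε * c₀ * (x s * v s) / s ^ 2
            - 4 * c₀ ^ 3 * (x s * u s) / s ^ 2
            - 4 * ε * c₀ ^ 2 * (u s ^ 2 - v s ^ 2) / s ^ 3 - 4 * B / s ^ 2 * (Ψ s + c)) := by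
        ring
      rw [he]
      exact mul_nonpos_of_nonneg_of_nonpos (Real.exp_pos _).le hδ
  have hΨbd : ∀ s : ℝ, S₀ ≤ s → Ψ s + c ≤ R S₀ := by
    intro s hs
    have hspos : 0 < s := lt_of_lt_of_le hS₀pos hs
    have h1 : Ψ s + c ≤ R s := by
      rw [hRdef]
      exact le_mul_of_one_le_right (hΨc s hs)
        (Real.one_le_exp (mul_nonneg (by positivity) (inv_nonneg.mpr hspos.le)))
    exact h1.trans (hanti (self_mem_Ici) hs hs)
  have hNS : ∀ s : ℝ, S₀ ≤ s → u s ^ 2 + v s ^ 2 ≤ 4 * (R S₀ - c) + |K| := by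
    intro s hs
    have h1 := hlow s hs
    have h2 := hΨbd s hs
    linarith
  -- global bound
  have hucont : Continuous u := continuous_iff_continuousAt.mpr fun s => (hu s).continuousAt
  have hvcont : Continuous v := continuous_iff_continuousAt.mpr fun s => (hv s).continuousAt
  have hNcont : Continuous fun s => u s ^ 2 + v s ^ 2 := by fun_prop
  obtain ⟨m, hmmem, hmax⟩ := isCompact_Icc.exists_isMaxOn (nonempty_Icc.mpr hS₀1)
    hNcont.continuousOn
  set M : ℝ := max (u m ^ 2 + v m ^ 2) (4 * (R S₀ - c) + |K|) + |K| + 1 with hMdef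
  have hmax' : ∀ s ∈ Icc (1:ℝ) S₀, u s ^ 2 + v s ^ 2 ≤ u m ^ 2 + v m ^ 2 := fun s hs => hmax hs
  have hM1 : 1 ≤ M := by
    have h0 : (0:ℝ) ≤ u m ^ 2 + v m ^ 2 := by positivity
    have := le_max_left (u m ^ 2 + v m ^ 2) (4 * (R S₀ - c) + |K|)
    rw [hMdef]; linarith
  have hNM : ∀ s : ℝ, 1 ≤ s → u s ^ 2 + v s ^ 2 ≤ M := by
    intro s hs
    rcases le_total s S₀ with h | h
    · have := hmax' s ⟨hs, h⟩
      have := le_max_left (u m ^ 2 + v m ^ 2) (4 * (R S₀ - c) + |K|)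
      rw [hMdef]; linarith
    · have := hNS s h
      have := le_max_right (u m ^ 2 + v m ^ 2) (4 * (R S₀ - c) + |K|)
      rw [hMdef]; linarith
  have hxM : ∀ s : ℝ, 1 ≤ s → x s ^ 2 ≤ M := by
    intro s hs
    have h1 := hxb s
    have h2 := hNM s hs
    rcases le_total s S₀ with h | h
    · have := hmax' s ⟨hs, h⟩
      have := le_max_left (u m ^ 2 + v m ^ 2) (4 * (R S₀ - c) + |K|)
      rw [hMdef]; linarith
    · have := hNS s h
      have := le_max_right (u m ^ 2 + v m ^ 2) (4 * (R S₀ - c) + |K|)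
      rw [hMdef]; linarith
  have habsu : ∀ s : ℝ, 1 ≤ s → |u s| ≤ M := by
    intro s hs
    have h2 := hNM s hs
    exact absle_of_sq (by nlinarith [sq_nonneg (v s)]) hM1
  have habsv : ∀ s : ℝ, 1 ≤ s → |v s| ≤ M := by
    intro s hs
    have h2 := hNM s hs
    exact absle_of_sq (by nlinarith [sq_nonneg (u s)]) hM1
  have habsx : ∀ s : ℝ, 1 ≤ s → |x s| ≤ M := by
    intro s hs
    exact absle_of_sq (hxM s hs) hM1
  -- the corrected position function H
  have hMpos : 0 < M := lt_of_lt_of_le one_pos hM1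
  set C₅ : ℝ := 4 * c₀ ^ 2 * M + 12 * c₀ * M with hC₅def
  have hC₅pos : 0 < C₅ := by
    have h1 : 0 < 4 * c₀ ^ 2 * M := by apply mul_pos (by nlinarith) hMpos
    have h2 : 0 < 12 * c₀ * M := by apply mul_pos (by nlinarith) hMpos
    rw [hC₅def]; linarith
  set Hf : ℝ → ℝ := fun r => x r + 2 * c₀ * v r / r + 4 * c₀ * u r / r ^ 3 with hHdef
  have hH : ∀ s : ℝ, 0 < s → HasDerivAt Hf
      (-(4 * ε * c₀ ^ 2 * x s) / s ^ 3 - 12 * c₀ * u s / s ^ 4) s := by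
    intro s hs
    have hs0 : s ≠ 0 := hs.ne'
    have hinv : HasDerivAt (fun r : ℝ => r⁻¹) (-(s ^ 2)⁻¹) s := hasDerivAt_inv hs0
    have hinv3 : HasDerivAt (fun r : ℝ => (r ^ 3)⁻¹) (-(3 * s ^ 2) / (s ^ 3) ^ 2) s := by
      have : HasDerivAt (fun r : ℝ => (r ^ 3)⁻¹) _ s := (hasDerivAt_pow 3 s).inv (by positivity)
      simpa using this
    have h2 := ((hv s).mul hinv).const_mul (2 * c₀)
    have h3 := ((hu s).mul hinv3).const_mul (4 * c₀)
    have h : HasDerivAt (F := ℝ) _ _ s := ((hx s).add h2).add h3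
    convert h using 1
    · funext r; simp only [hHdef, Pi.add_apply, Pi.mul_apply]; ring
    · field_simp; ring
  -- bounds on the derivative of H
  have hεx : ∀ s : ℝ, 1 ≤ s → |ε * x s| ≤ M := by
    intro s hs
    rw [abs_mul]
    calc |ε| * |x s| ≤ 1 * M :=
          mul_le_mul (abs_le.mpr ⟨hε1, hε1'⟩) (habsx s hs) (abs_nonneg _) one_pos.le
    _ = M := one_mul M
  have hub : ∀ s : ℝ, 1 ≤ s →
      -(4 * ε * c₀ ^ 2 * x s) / s ^ 3 - 12 * c₀ * u s / s ^ 4 ≤ C₅ / s ^ 3 := by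
    intro s hs
    have hspos : (0:ℝ) < s := by linarith
    have hs4 : (0:ℝ) < s ^ 4 := by positivity
    rw [← mul_le_mul_iff_right₀ hs4]
    have e1 : s ^ 4 * (-(4 * ε * c₀ ^ 2 * x s) / s ^ 3 - 12 * c₀ * u s / s ^ 4)
        = -(4 * (ε * x s)) * c₀ ^ 2 * s - 12 * c₀ * u s := by field_simp
    have e2 : s ^ 4 * (C₅ / s ^ 3) = C₅ * s := by field_simp
    rw [e1, e2, hC₅def]
    obtain ⟨hεx1, hεx2⟩ := abs_le.mp (hεx s hs)
    obtain ⟨hu1, hu2⟩ := abs_le.mp (habsu s hs)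
    nlinarith [mul_nonneg (mul_nonneg (by positivity : (0:ℝ) ≤ 4 * c₀ ^ 2) hspos.le)
        (by linarith : 0 ≤ M + ε * x s),
      mul_nonneg (by nlinarith : (0:ℝ) ≤ 12 * c₀) (by linarith : 0 ≤ M + u s),
      mul_nonneg (mul_nonneg (by nlinarith : (0:ℝ) ≤ 12 * c₀) hMpos.le)
        (by linarith : (0:ℝ) ≤ s - 1)]
  have hlb : ∀ s : ℝ, 1 ≤ s →
      -(C₅ / s ^ 3) ≤ -(4 * ε * c₀ ^ 2 * x s) / s ^ 3 - 12 * c₀ * u s / s ^ 4 := by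
    intro s hs
    have hspos : (0:ℝ) < s := by linarith
    have hs4 : (0:ℝ) < s ^ 4 := by positivity
    rw [← mul_le_mul_iff_right₀ hs4]
    have e1 : s ^ 4 * (-(4 * ε * c₀ ^ 2 * x s) / s ^ 3 - 12 * c₀ * u s / s ^ 4)
        = -(4 * (ε * x s)) * c₀ ^ 2 * s - 12 * c₀ * u s := by field_simp
    have e2 : s ^ 4 * -(C₅ / s ^ 3) = -(C₅ * s) := by field_simp
    rw [e1, e2, hC₅def]
    obtain ⟨hεx1, hεx2⟩ := abs_le.mp (hεx s hs)
    obtain ⟨hu1, hu2⟩ := abs_le.mp (habsu s hs)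
    nlinarith [mul_nonneg (mul_nonneg (by positivity : (0:ℝ) ≤ 4 * c₀ ^ 2) hspos.le)
        (by linarith : 0 ≤ M - ε * x s),
      mul_nonneg (by nlinarith : (0:ℝ) ≤ 12 * c₀) (by linarith : 0 ≤ M - u s),
      mul_nonneg (mul_nonneg (by nlinarith : (0:ℝ) ≤ 12 * c₀) hMpos.le)
        (by linarith : (0:ℝ) ≤ s - 1)]
  -- monotone auxiliary functions
  set Hp : ℝ → ℝ := fun r => Hf r + C₅ / 2 * (r ^ 2)⁻¹ with hHpdef
  set Hm : ℝ → ℝ := fun r => Hf r - C₅ / 2 * (r ^ 2)⁻¹ with hHmdef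
  have hinv2' : ∀ s : ℝ, 0 < s →
      HasDerivAt (fun r : ℝ => C₅ / 2 * (r ^ 2)⁻¹) (C₅ / 2 * (-(2 * s) / (s ^ 2) ^ 2)) s := by
    intro s hs
    have : HasDerivAt (fun r : ℝ => C₅ / 2 * (r ^ 2)⁻¹) _ s :=
      ((hasDerivAt_pow 2 s).inv (by positivity)).const_mul (C₅ / 2)
    simpa using this
  have hHp : ∀ s : ℝ, 0 < s → HasDerivAt Hp
      ((-(4 * ε * c₀ ^ 2 * x s) / s ^ 3 - 12 * c₀ * u s / s ^ 4)
        + C₅ / 2 * (-(2 * s) / (s ^ 2) ^ 2)) s :=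
    fun s hs => (hH s hs).add (hinv2' s hs)
  have hHm : ∀ s : ℝ, 0 < s → HasDerivAt Hm
      ((-(4 * ε * c₀ ^ 2 * x s) / s ^ 3 - 12 * c₀ * u s / s ^ 4)
        - C₅ / 2 * (-(2 * s) / (s ^ 2) ^ 2)) s :=
    fun s hs => (hH s hs).sub (hinv2' s hs)
  have hcorr : ∀ s : ℝ, 0 < s → C₅ / 2 * (-(2 * s) / (s ^ 2) ^ 2) = -(C₅ / s ^ 3) := by
    intro s hs
    have hs0 : s ≠ 0 := hs.ne'
    field_simp
  have hpanti : AntitoneOn Hp (Ici (1:ℝ)) := by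
    apply antitoneOn_of_deriv_nonpos (convex_Ici 1)
    · intro s hs
      exact (hHp s (lt_of_lt_of_le one_pos hs)).continuousAt.continuousWithinAt
    · intro s hs
      rw [interior_Ici] at hs
      exact (hHp s (lt_trans one_pos hs)).differentiableAt.differentiableWithinAt
    · intro s hs
      rw [interior_Ici] at hs
      have hspos : (0:ℝ) < s := lt_trans one_pos hs
      rw [(hHp s hspos).deriv, hcorr s hspos]
      have := hub s hs.le
      linarith
  have hmmono : MonotoneOn Hm (Ici (1:ℝ)) := by
    apply monotoneOn_of_deriv_nonneg (convex_Ici 1)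
    · intro s hs
      exact (hHm s (lt_of_lt_of_le one_pos hs)).continuousAt.continuousWithinAt
    · intro s hs
      rw [interior_Ici] at hs
      exact (hHm s (lt_trans one_pos hs)).differentiableAt.differentiableWithinAt
    · intro s hs
      rw [interior_Ici] at hs
      have hspos : (0:ℝ) < s := lt_trans one_pos hs
      rw [(hHm s hspos).deriv, hcorr s hspos]
      have := hlb s hs.le
      linarith
  have hCau : ∀ s t : ℝ, 1 ≤ s → s ≤ t → |Hf t - Hf s| ≤ C₅ / s ^ 2 := by
    intro s t hs hst
    have hts : (1:ℝ) ≤ t := le_trans hs hst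
    have hp := hpanti (mem_Ici.mpr hs) (mem_Ici.mpr hts) hst
    have hm := hmmono (mem_Ici.mpr hs) (mem_Ici.mpr hts) hst
    simp only [hHpdef] at hp
    simp only [hHmdef] at hm
    have hf1 : 0 ≤ C₅ / 2 * ((t ^ 2)⁻¹) := mul_nonneg (by linarith) (by positivity)
    have hf4 : 0 ≤ C₅ / 2 * ((s ^ 2)⁻¹) := mul_nonneg (by linarith) (by positivity)
    have hf3 : C₅ * (s ^ 2)⁻¹ = C₅ / s ^ 2 := (div_eq_mul_inv _ _).symm
    rw [abs_le]
    constructor <;> nlinarith [hp, hm, hf1, hf4]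
  -- Cauchy sequence and limit
  have hpow2 : Tendsto (fun N : ℕ => ((N:ℝ) + 1) ^ 2) atTop atTop :=
    (tendsto_pow_atTop (by norm_num : 2 ≠ 0)).comp
      (tendsto_atTop_add_const_right atTop 1 tendsto_natCast_atTop_atTop)
  have hbten : Tendsto (fun N : ℕ => C₅ / ((N:ℝ) + 1) ^ 2) atTop (𝓝 0) :=
    Tendsto.div_atTop tendsto_const_nhds hpow2
  have hcs : CauchySeq (fun n : ℕ => Hf ((n:ℝ) + 1)) := by
    apply cauchySeq_of_le_tendsto_0 (fun N : ℕ => C₅ / ((N:ℝ) + 1) ^ 2) _ hbten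
    intro n m N hn hm
    have key : ∀ n m : ℕ, N ≤ n → N ≤ m → n ≤ m →
        dist (Hf ((n:ℝ) + 1)) (Hf ((m:ℝ) + 1)) ≤ C₅ / ((N:ℝ) + 1) ^ 2 := by
      intro n m hn hm hnm
      rw [Real.dist_eq, abs_sub_comm]
      have h1 : (1:ℝ) ≤ (n:ℝ) + 1 := by
        have := Nat.cast_nonneg (α := ℝ) n
        linarith
      have h2 : ((n:ℝ)) + 1 ≤ (m:ℝ) + 1 := by
        have : (n:ℝ) ≤ (m:ℝ) := by exact_mod_cast hnm
        linarith
      calc |Hf ((m:ℝ) + 1) - Hf ((n:ℝ) + 1)| ≤ C₅ / ((n:ℝ) + 1) ^ 2 := hCau _ _ h1 h2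
      _ ≤ C₅ / ((N:ℝ) + 1) ^ 2 := by
          have hNn : ((N:ℝ)) + 1 ≤ (n:ℝ) + 1 := by
            have : (N:ℝ) ≤ (n:ℝ) := by exact_mod_cast hn
            linarith
          gcongr
    rcases le_total n m with h | h
    · exact key n m hn hm h
    · rw [dist_comm]; exact key m n hm hn h
  obtain ⟨L, hL⟩ := cauchySeq_tendsto_of_complete hcs
  have hrate : ∀ s : ℝ, 1 ≤ s → |Hf s - L| ≤ C₅ / s ^ 2 := by
    intro s hs
    have h1 : Tendsto (fun n : ℕ => |Hf s - Hf ((n:ℝ) + 1)|) atTop (𝓝 |Hf s - L|) :=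
      (tendsto_const_nhds.sub hL).abs
    apply le_of_tendsto h1
    filter_upwards [eventually_ge_atTop ⌈s⌉₊] with n hn
    have hsn : s ≤ (n:ℝ) + 1 := by
      have h2 : (⌈s⌉₊ : ℝ) ≤ (n:ℝ) := by exact_mod_cast hn
      linarith [Nat.le_ceil s]
    rw [abs_sub_comm]
    exact hCau s _ hs hsn
  -- convergence of x
  have hHtend : Tendsto Hf atTop (𝓝 L) := by
    have h0 : Tendsto (fun s : ℝ => C₅ / s ^ 2) atTop (𝓝 0) :=
      Tendsto.div_atTop tendsto_const_nhds (tendsto_pow_atTop (by norm_num : 2 ≠ 0))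
    have h1 : Tendsto (fun s : ℝ => Hf s - L) atTop (𝓝 0) := by
      apply squeeze_zero_norm' _ h0
      filter_upwards [eventually_ge_atTop (1:ℝ)] with s hs
      exact hrate s hs
    have := h1.add_const L
    simpa using this
  have hterm1 : Tendsto (fun s : ℝ => 2 * c₀ * v s / s) atTop (𝓝 0) := by
    have h0 : Tendsto (fun s : ℝ => 2 * c₀ * M / s) atTop (𝓝 0) := by
      simpa using Tendsto.div_atTop (tendsto_const_nhds (x := 2 * c₀ * M)) tendsto_id
    apply squeeze_zero_norm' _ h0
    filter_upwards [eventually_ge_atTop (1:ℝ)] with s hs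
    have hspos : (0:ℝ) < s := by linarith
    rw [Real.norm_eq_abs, abs_div, abs_of_pos hspos]
    apply (div_le_div_iff_of_pos_right hspos).mpr
    calc |2 * c₀ * v s| = 2 * c₀ * |v s| := by
          rw [abs_mul, abs_of_nonneg (by positivity : (0:ℝ) ≤ 2 * c₀)]
    _ ≤ 2 * c₀ * M := mul_le_mul_of_nonneg_left (habsv s hs) (by positivity)
  have hterm2 : Tendsto (fun s : ℝ => 4 * c₀ * u s / s ^ 3) atTop (𝓝 0) := by
    have h0 : Tendsto (fun s : ℝ => 4 * c₀ * M / s ^ 3) atTop (𝓝 0) :=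
      Tendsto.div_atTop (tendsto_const_nhds (x := 4 * c₀ * M))
        (tendsto_pow_atTop (by norm_num : 3 ≠ 0))
    apply squeeze_zero_norm' _ h0
    filter_upwards [eventually_ge_atTop (1:ℝ)] with s hs
    have hsp : (0:ℝ) < s := by linarith
    have hspos : (0:ℝ) < s ^ 3 := by positivity
    rw [Real.norm_eq_abs, abs_div, abs_of_pos hspos]
    apply (div_le_div_iff_of_pos_right hspos).mpr
    calc |4 * c₀ * u s| = 4 * c₀ * |u s| := by
          rw [abs_mul, abs_of_nonneg (by positivity : (0:ℝ) ≤ 4 * c₀)]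
    _ ≤ 4 * c₀ * M := mul_le_mul_of_nonneg_left (habsu s hs) (by positivity)
  have hxeq : x = fun s => Hf s - (2 * c₀ * v s / s + 4 * c₀ * u s / s ^ 3) := by
    funext s; simp only [hHdef]; ring
  have hxt : Tendsto x atTop (𝓝 L) := by
    rw [hxeq]
    have := hHtend.sub (hterm1.add hterm2)
    simpa using this
  -- final estimate
  refine ⟨L, C₅ + 4 * c₀ * M + 1, ?_, ?_, hxt⟩
  · have : 0 < 4 * c₀ * M := mul_pos (by linarith) hMpos
    linarith
  · intro s hs
    have hspos : (0:ℝ) < s := by linarith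
    have e : x s - L + 2 * c₀ / s * v s = (Hf s - L) + -(4 * c₀ * u s / s ^ 3) := by
      simp only [hHdef]; ring
    rw [e]
    have h1 : |(Hf s - L) + -(4 * c₀ * u s / s ^ 3)| ≤ |Hf s - L| + |4 * c₀ * u s / s ^ 3| := by
      calc |(Hf s - L) + -(4 * c₀ * u s / s ^ 3)| ≤ |Hf s - L| + |-(4 * c₀ * u s / s ^ 3)| :=
            abs_add_le _ _
      _ = |Hf s - L| + |4 * c₀ * u s / s ^ 3| := by rw [abs_neg]
    have h2 : |4 * c₀ * u s / s ^ 3| ≤ 4 * c₀ * M / s ^ 2 := by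
      rw [abs_div, abs_of_pos (by positivity : (0:ℝ) < s ^ 3)]
      have hnum : |4 * c₀ * u s| ≤ 4 * c₀ * M := by
        calc |4 * c₀ * u s| = 4 * c₀ * |u s| := by
              rw [abs_mul, abs_of_nonneg (by positivity : (0:ℝ) ≤ 4 * c₀)]
        _ ≤ 4 * c₀ * M := mul_le_mul_of_nonneg_left (habsu s hs) (by positivity)
      have hnn : (0:ℝ) ≤ 4 * c₀ * M :=
        (mul_pos (mul_pos (by norm_num : (0:ℝ) < 4) hc₀) hMpos).le
      calc |4 * c₀ * u s| / s ^ 3 ≤ (4 * c₀ * M) / s ^ 3 :=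
            (div_le_div_iff_of_pos_right (by positivity)).mpr hnum
      _ ≤ 4 * c₀ * M / s ^ 2 := by
            rw [div_le_div_iff₀ (by positivity) (by positivity)]
            nlinarith [mul_nonneg hnn (by nlinarith : (0:ℝ) ≤ s ^ 3 - s ^ 2)]
    have h3 := hrate s hs
    have h4 : C₅ / s ^ 2 + 4 * c₀ * M / s ^ 2 ≤ (C₅ + 4 * c₀ * M + 1) / s ^ 2 := by
      rw [← add_div]
      exact (div_le_div_iff_of_pos_right (by positivity : (0:ℝ) < s ^ 2)).mpr (by linarith)
    linarith

set_option maxHeartbeats 1600000 in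
theorem stmt2 (c₀ ε : ℝ) (hc₀ : 0 < c₀) (hε : ε = 1 ∨ ε = -1)
    (T e₁ e₂ : ℝ → Fin 3 → ℝ)
    (hT : ∀ s, HasDerivAt T (c₀ • e₁ s) s)
    (he₁ : ∀ s, HasDerivAt e₁ ((-(ε * c₀)) • T s + (s / 2) • e₂ s) s)
    (he₂ : ∀ s, HasDerivAt e₂ ((-(s / 2)) • e₁ s) s)
    (hT0 : T 0 = ![0, 0, 1])
    (he₁0 : e₁ 0 = ![1, 0, 0])
    (he₂0 : e₂ 0 = ![0, 1, 0]) :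
    ∃ (A1 A2 : Fin 3 → ℝ) (C : ℝ), 0 < C ∧
      (∀ s : ℝ, 1 ≤ s → norm3 (T s - A1 + (2 * c₀ / s) • e₂ s) ≤ C / s ^ 2) ∧
      (∀ s : ℝ, s ≤ -1 → norm3 (T s - A2 + (2 * c₀ / s) • e₂ s) ≤ C / s ^ 2) ∧
      Tendsto T atTop (𝓝 A1) ∧ Tendsto T atBot (𝓝 A2) := by
  -- componentwise derivatives
  have hTj : ∀ (j : Fin 3) (s : ℝ), HasDerivAt (fun s => T s j) (c₀ * e₁ s j) s := by
    intro j s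
    have := hasDerivAt_pi.mp (hT s) j
    simpa using this
  have he₁j : ∀ (j : Fin 3) (s : ℝ), HasDerivAt (fun s => e₁ s j)
      (-(ε * c₀) * T s j + (s / 2) * e₂ s j) s := by
    intro j s
    have := hasDerivAt_pi.mp (he₁ s) j
    simpa using this
  have he₂j : ∀ (j : Fin 3) (s : ℝ), HasDerivAt (fun s => e₂ s j) (-(s / 2) * e₁ s j) s := by
    intro j s
    have := hasDerivAt_pi.mp (he₂ s) j
    simpa using this
  -- positive direction
  have hpos : ∀ j : Fin 3, ∃ L C : ℝ, 0 < C ∧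
      (∀ s : ℝ, 1 ≤ s → |T s j - L + (2 * c₀ / s) * e₂ s j| ≤ C / s ^ 2) ∧
      Tendsto (fun s => T s j) atTop (𝓝 L) := fun j =>
    core c₀ ε hc₀ hε _ _ _ (hTj j) (he₁j j) (he₂j j)
  choose L1 C1 hC1 hbd1 htd1 using hpos
  -- negative direction via reflection
  have hneg : ∀ j : Fin 3, ∃ L C : ℝ, 0 < C ∧
      (∀ s : ℝ, 1 ≤ s → |T (-s) j - L + (2 * c₀ / s) * (-(e₂ (-s) j))| ≤ C / s ^ 2) ∧
      Tendsto (fun s => T (-s) j) atTop (𝓝 L) := by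
    intro j
    have hxr : ∀ s : ℝ, HasDerivAt (fun r : ℝ => T (-r) j) (c₀ * (-(e₁ (-s) j))) s := by
      intro s
      have h1 : HasDerivAt (fun r : ℝ => T (-r) j) (c₀ * e₁ (-s) j * -1) s :=
        HasDerivAt.comp s (hTj j (-s)) (hasDerivAt_neg s)
      convert h1 using 1
      ring
    have hur : ∀ s : ℝ, HasDerivAt (fun r : ℝ => -(e₁ (-r) j))
        (-(ε * c₀) * T (-s) j + (s / 2) * (-(e₂ (-s) j))) s := by
      intro s
      have h1 : HasDerivAt (fun r : ℝ => e₁ (-r) j)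
          ((-(ε * c₀) * T (-s) j + (-s / 2) * e₂ (-s) j) * -1) s :=
        HasDerivAt.comp s (he₁j j (-s)) (hasDerivAt_neg s)
      have h2 : HasDerivAt (fun r : ℝ => -(e₁ (-r) j)) _ s := h1.neg
      convert h2 using 1
      ring
    have hvr : ∀ s : ℝ, HasDerivAt (fun r : ℝ => -(e₂ (-r) j))
        (-(s / 2) * (-(e₁ (-s) j))) s := by
      intro s
      have h1 : HasDerivAt (fun r : ℝ => e₂ (-r) j) (-(-s / 2) * e₁ (-s) j * -1) s :=
        HasDerivAt.comp s (he₂j j (-s)) (hasDerivAt_neg s)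
      have h2 : HasDerivAt (fun r : ℝ => -(e₂ (-r) j)) _ s := h1.neg
      convert h2 using 1
      ring
    exact core c₀ ε hc₀ hε _ _ _ hxr hur hvr
  choose L2 C2 hC2 hbd2 htd2 using hneg
  refine ⟨L1, L2, C1 0 + C1 1 + C1 2 + (C2 0 + C2 1 + C2 2), ?_, ?_, ?_, ?_, ?_⟩
  · have := hC1 0; have := hC1 1; have := hC1 2
    have := hC2 0; have := hC2 1; have := hC2 2
    linarith
  · -- bound for s ≥ 1
    intro s hs
    have hs2 : (0:ℝ) < s ^ 2 := by nlinarith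
    have hj : ∀ j : Fin 3, |(T s - L1 + (2 * c₀ / s) • e₂ s) j| ≤ C1 j / s ^ 2 := by
      intro j
      have h := hbd1 j s hs
      simpa [Pi.add_apply, Pi.sub_apply, Pi.smul_apply, smul_eq_mul] using h
    calc norm3 (T s - L1 + (2 * c₀ / s) • e₂ s)
        ≤ |(T s - L1 + (2 * c₀ / s) • e₂ s) 0| + |(T s - L1 + (2 * c₀ / s) • e₂ s) 1|
          + |(T s - L1 + (2 * c₀ / s) • e₂ s) 2| := norm3_le_sum _
    _ ≤ C1 0 / s ^ 2 + C1 1 / s ^ 2 + C1 2 / s ^ 2 := by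
        linarith [hj 0, hj 1, hj 2]
    _ ≤ (C1 0 + C1 1 + C1 2 + (C2 0 + C2 1 + C2 2)) / s ^ 2 := by
        rw [← add_div, ← add_div]
        exact (div_le_div_iff_of_pos_right hs2).mpr
          (by linarith [(hC2 0), (hC2 1), (hC2 2)])
  · -- bound for s ≤ -1
    intro s hs
    have hσ : (1:ℝ) ≤ -s := by linarith
    have hs2 : (0:ℝ) < s ^ 2 := by nlinarith
    have hj : ∀ j : Fin 3, |(T s - L2 + (2 * c₀ / s) • e₂ s) j| ≤ C2 j / s ^ 2 := by
      intro j
      have h := hbd2 j (-s) hσ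
      have e1 : T (-(-s)) j - L2 j + 2 * c₀ / -s * -(e₂ (-(-s)) j)
          = T s j - L2 j + 2 * c₀ / s * e₂ s j := by
        simp only [neg_neg, div_neg]
        ring
      have e2 : (-s) ^ 2 = s ^ 2 := by ring
      rw [e1, e2] at h
      simpa [Pi.add_apply, Pi.sub_apply, Pi.smul_apply, smul_eq_mul] using h
    calc norm3 (T s - L2 + (2 * c₀ / s) • e₂ s)
        ≤ |(T s - L2 + (2 * c₀ / s) • e₂ s) 0| + |(T s - L2 + (2 * c₀ / s) • e₂ s) 1|
          + |(T s - L2 + (2 * c₀ / s) • e₂ s) 2| := norm3_le_sum _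
    _ ≤ C2 0 / s ^ 2 + C2 1 / s ^ 2 + C2 2 / s ^ 2 := by
        linarith [hj 0, hj 1, hj 2]
    _ ≤ (C1 0 + C1 1 + C1 2 + (C2 0 + C2 1 + C2 2)) / s ^ 2 := by
        rw [← add_div, ← add_div]
        exact (div_le_div_iff_of_pos_right hs2).mpr
          (by linarith [(hC1 0), (hC1 1), (hC1 2)])
  · rw [tendsto_pi_nhds]
    exact htd1
  · rw [tendsto_pi_nhds]
    intro j
    have h1 : Tendsto (fun s : ℝ => T (-(-s)) j) atBot (𝓝 (L2 j)) :=
      (htd2 j).comp (tendsto_neg_atBot_atTop (G := ℝ))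
    simpa only [neg_neg] using h1
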